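/- arXiv:1402.2040 — 2 statements merged into one kernel-verified Lean document; each statement's English description precedes it below -/
import Mathlib

section
/- For integers n and m with 2 ≤ m ≤ n−1, the Stirling numbers of the second kind satisfy the strict inequality (m−1)(n−m) · S(n,m)² > (m+1)(n−m+1) · S(n,m−1) · S(n,m+1). -/
/-- Stirling numbers of the second kind. -/
def S : ℕ → ℕ → ℕ
  | 0, 0 => 1
  | 0, _ + 1 => 0
  | _ + 1, 0 => 0
  | n + 1, k + 1 => (k + 1) * S n (k + 1) + S n k

lemma S_succ_succ (n k : ℕ) : S (n+1) (k+1) = (k+1) * S n (k+1) + S n k := rfl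

lemma S_zero_right (n : ℕ) : S (n+1) 0 = 0 := rfl

lemma S_eq_zero : ∀ n k : ℕ, n < k → S n k = 0 := by
  intro n
  induction n with
  | zero => intro k hk; match k, hk with | k+1, _ => rfl
  | succ n ih =>
    intro k hk
    match k, hk with
    | k+1, hk =>
      rw [S_succ_succ, ih (k+1) (by omega), ih k (by omega)]; ring

lemma S_self : ∀ n : ℕ, S n n = 1 := by
  intro n
  induction n with
  | zero => rfl
  | succ n ih => rw [S_succ_succ, ih, S_eq_zero n (n+1) (by omega)]; ring

lemma S_pos : ∀ n k : ℕ, 1 ≤ k → k ≤ n → 0 < S n k := by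
  intro n
  induction n with
  | zero => intro k h1 h2; omega
  | succ n ih =>
    intro k h1 h2
    match k, h1 with
    | j+1, _ =>
      rw [S_succ_succ]
      rcases Nat.eq_zero_or_pos j with hj | hj
      · subst hj
        rcases Nat.eq_zero_or_pos n with hn | hn
        · subst hn; decide
        · have := ih 1 le_rfl hn
          simp only [Nat.zero_add]
          omega
      · have := ih j hj (by omega)
        omega

lemma S_pred : ∀ n : ℕ, 2 * S (n+1) n = n * (n+1) := by
  intro n
  induction n with
  | zero => rfl
  | succ n ih =>
    rw [S_succ_succ, S_self]
    linear_combination ih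

lemma S_pred2 : ∀ n : ℕ, 24 * S (n+2) n = n*(n+1)*(n+2)*(3*n+1) := by
  intro n
  induction n with
  | zero => rfl
  | succ n ih =>
    rw [S_succ_succ]
    linear_combination (12*(n+1)) * S_pred (n+1) + ih

lemma boundary (k : ℕ) :
    (k+3)*(0+2)*(S (k+3) (k+1) * S (k+3) (k+3)) < (k+1)*(0+1)*(S (k+3) (k+2))^2 := by
  have h24 := S_pred2 (k+1)
  have h2 := S_pred (k+2)
  rw [S_self]
  apply Nat.lt_of_mul_lt_mul_left (a := 24)
  have e1 : 24 * ((k+3)*(0+2)*(S (k+3) (k+1) * 1)) = 2*(k+3)*(24 * S (k+3) (k+1)) := by ring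
  have e2 : 24 * ((k+1)*(0+1)*(S (k+3) (k+2))^2) = 6*(k+1)*(2 * S (k+3) (k+2))^2 := by ring
  rw [e1, e2, h24, h2]
  have hlt : 6*k+8 < 6*k+12 := by omega
  calc 2*(k+3)*((k+1)*(k+2)*(k+3)*(3*(k+1)+1))
      = ((k+1)*(k+2)*(k+3)^2) * (6*k+8) := by ring
    _ < ((k+1)*(k+2)*(k+3)^2) * (6*k+12) := by
        have hC : 0 < (k+1)*(k+2)*(k+3)^2 := by positivity
        exact mul_lt_mul_of_pos_left hlt hC
    _ = 6*(k+1)*((k+2)*(k+3))^2 := by ring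

set_option maxHeartbeats 2000000 in
lemma step (k d A a b c : ℕ) (ha : 1 ≤ a) (hb : 1 ≤ b)
    (H1 : (k+3)*(d+1)*(a*c) < (k+1)*d*b^2)
    (H2 : (k+2)*(d+2)*(A*b) ≤ k*(d+1)*a^2) :
    (k+3)*(d+2)*(((k+1)*a + A) * ((k+3)*c + b)) < (k+1)*(d+1)*((k+2)*b + a)^2 := by
  zify at H1 H2 ⊢
  have ha' : (1:ℤ) ≤ (a:ℤ) := by exact_mod_cast ha
  have hb' : (1:ℤ) ≤ (b:ℤ) := by exact_mod_cast hb
  have hab : (1:ℤ) ≤ (a:ℤ)*(b:ℤ) := by nlinarith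
  have H1' := Int.lt_iff_add_one_le.mp H1
  have F1nn : (0:ℤ) ≤ ((k:ℤ)+1)*((k:ℤ)+2)*((k:ℤ)+3)^2*((d:ℤ)+2)*((a:ℤ)*(b:ℤ)) := by positivity
  have Q1 := mul_le_mul_of_nonneg_left H1' F1nn
  have F2nn : (0:ℤ) ≤ ((k:ℤ)+3)^2*((d:ℤ)+1)*((a:ℤ)*(b:ℤ)) := by positivity
  have Q2 := mul_le_mul_of_nonneg_left H2 F2nn
  have X2nn : (0:ℤ) ≤ ((k:ℤ)+2)*((d:ℤ)+2)*((A:ℤ)*(b:ℤ)) := by positivity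
  have Y1nn : (0:ℤ) ≤ ((k:ℤ)+1)*(d:ℤ)*(b:ℤ)^2 := by positivity
  have Q3pre := mul_le_mul H1.le H2 X2nn Y1nn
  have Q3 := mul_le_mul_of_nonneg_left Q3pre (by positivity : (0:ℤ) ≤ ((k:ℤ)+3)^2)
  have QF : (0:ℤ) ≤ ((k:ℤ)+3)*((a:ℤ)*(b:ℤ))*(
      (((k:ℤ)+1)*((k:ℤ)+2)*(b:ℤ) - 2*((d:ℤ)+1)*(a:ℤ))^2
      + 2*((k:ℤ)+1)*((k:ℤ)+2)*(d:ℤ)*((d:ℤ)+2)*(b:ℤ)^2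
      + ((k:ℤ)+1)*((k:ℤ)+2)^2*((k:ℤ)+3)*(b:ℤ)^2
      + 4*((k:ℤ)+1)*(d:ℤ)*((d:ℤ)+1)*((a:ℤ)*(b:ℤ)) ) := by positivity
  have hCpos : (0:ℤ) < ((k:ℤ)+1)*((k:ℤ)+2)*((k:ℤ)+3)^2*((d:ℤ)+2) := by positivity
  have hC1 : (1:ℤ) ≤ ((k:ℤ)+1)*((k:ℤ)+2)*((k:ℤ)+3)^2*((d:ℤ)+2) := by
    have := Int.lt_iff_add_one_le.mp hCpos; linarith
  have hF1 : (1:ℤ) ≤ ((k:ℤ)+1)*((k:ℤ)+2)*((k:ℤ)+3)^2*((d:ℤ)+2)*((a:ℤ)*(b:ℤ)) := by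
    calc (1:ℤ) = 1*1 := by ring
      _ ≤ _ := mul_le_mul hC1 hab (by norm_num) (by linarith)
  have hM : (0:ℤ) < (((k:ℤ)+2)*((k:ℤ)+3)*((d:ℤ)+1)) * ((a:ℤ)*(b:ℤ)) :=
    mul_pos (by positivity) (lt_of_lt_of_le one_pos hab)
  refine lt_of_mul_lt_mul_left ?_ hM.le
  linarith [Q1, Q2, Q3, QF, hF1]

lemma main : ∀ n k d : ℕ, n = k + d + 3 →
    (k+3)*(d+2)*(S n (k+1) * S n (k+3)) < (k+1)*(d+1)*(S n (k+2))^2 := by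
  intro n
  induction n with
  | zero => intro k d h; omega
  | succ n ih =>
    intro k d h
    rcases d with _ | e
    · have hn : n = k + 2 := by omega
      subst hn
      exact boundary k
    · have hn : n = k + e + 3 := by omega
      have e1 : S (n+1) (k+1) = (k+1)*S n (k+1) + S n k := rfl
      have e2 : S (n+1) (k+2) = (k+2)*S n (k+2) + S n (k+1) := rfl
      have e3 : S (n+1) (k+3) = (k+3)*S n (k+3) + S n (k+2) := rfl
      rw [e1, e2, e3]
      have ha : 1 ≤ S n (k+1) := S_pos n (k+1) (by omega) (by omega)
      have hb : 1 ≤ S n (k+2) := S_pos n (k+2) (by omega) (by omega)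
      have H1 : (k+3)*((e+1)+1)*(S n (k+1) * S n (k+3)) < (k+1)*(e+1)*(S n (k+2))^2 :=
        ih k e (by omega)
      have H2 : (k+2)*((e+1)+2)*(S n k * S n (k+2)) ≤ k*((e+1)+1)*(S n (k+1))^2 := by
        rcases k with _ | j
        · have hA : S n 0 = 0 := by
            rcases n with _ | n'
            · omega
            · rfl
          rw [hA]; simp
        · exact (ih j (e+1) (by omega)).le
      exact step k (e+1) (S n k) (S n (k+1)) (S n (k+2)) (S n (k+3)) ha hb H1 H2

theorem stirling2_sibuya_ineq (n m : ℕ) (h2 : 2 ≤ m) (hm : m ≤ n - 1) :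
    (m + 1) * (n - m + 1) * (S n (m - 1) * S n (m + 1)) <
      (m - 1) * (n - m) * S n m ^ 2 := by
  obtain ⟨k, rfl⟩ : ∃ k, m = k + 2 := ⟨m - 2, by omega⟩
  obtain ⟨d, rfl⟩ : ∃ d, n = k + d + 3 := ⟨n - k - 3, by omega⟩
  have h1 : k + 2 - 1 = k + 1 := by omega
  have h2' : k + 2 + 1 = k + 3 := by omega
  have h3 : k + d + 3 - (k+2) = d + 1 := by omega
  rw [h1, h2', h3]
  exact main (k+d+3) k d rfl
end

section
/- For integers n ≥ k ≥ 0, S(n,k)/C(n,k) equals the n−k-th derivative at 0 of the function x ↦ ((e^x − 1)/x)^k (with value 1^k at x = 0); equivalently, S(n,k) = C(n,k) · lim_{x→0} d^{n−k}/dx^{n−k} [((e^x−1)/x)^k]. -/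
lemma S_eq_zero_of_lt : ∀ {n k : ℕ}, n < k → S n k = 0 := by
  intro n
  induction n with
  | zero => intro k hk; cases k with
    | zero => omega
    | succ k => rfl
  | succ n ih =>
    intro k hk
    cases k with
    | zero => omega
    | succ k => simp [S, ih (show n < k by omega), ih (show n < k+1 by omega)]

lemma S_self_s18 (k : ℕ) : S k k = 1 := by
  induction k with
  | zero => rfl
  | succ k ih => simp [S, ih, S_eq_zero_of_lt (Nat.lt_succ_self k)]

open scoped Nat

lemma dExp : (PowerSeries.exp ℝ - 1).derivativeFun = PowerSeries.exp ℝ := by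
  ext n
  rw [show ∀ f : PowerSeries ℝ, f.derivativeFun = PowerSeries.derivative ℝ f from fun _ => rfl, PowerSeries.coeff_derivativeFun]
  simp only [map_sub, PowerSeries.coeff_exp, PowerSeries.coeff_one, eq_ratCast]
  rw [if_neg (Nat.succ_ne_zero n)]
  push_cast
  rw [Nat.factorial_succ]
  push_cast
  have h1 : (n ! : ℝ) ≠ 0 := by positivity
  field_simp
  simp


lemma dPow (f : PowerSeries ℝ) (k : ℕ) :
    (f ^ (k+1)).derivativeFun = ((k : PowerSeries ℝ)+1) * f ^ k * f.derivativeFun := by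
  induction k with
  | zero => simp
  | succ k ih =>
    rw [pow_succ, PowerSeries.derivativeFun_mul, ih]
    push_cast
    ring_nf

lemma coeff_E (k : ℕ) : ∀ n : ℕ,
    (PowerSeries.coeff n ((PowerSeries.exp ℝ - 1) ^ k)) * (n ! : ℝ)
      = (k ! : ℝ) * (S n k : ℝ) := by
  induction k with
  | zero =>
    intro n
    cases n with
    | zero => simp [S]
    | succ n => simp [S, PowerSeries.coeff_one]
  | succ k ihk =>
    intro n
    induction n with
    | zero =>
      have h0 : PowerSeries.constantCoeff ((PowerSeries.exp ℝ - 1) ^ (k+1)) = 0 := by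
        rw [map_pow, map_sub, PowerSeries.constantCoeff_exp, map_one, sub_self,
          zero_pow (Nat.succ_ne_zero k)]
      simp [S, PowerSeries.coeff_zero_eq_constantCoeff, h0]
    | succ n ihn =>
      have hd : PowerSeries.coeff (n+1) ((PowerSeries.exp ℝ - 1) ^ (k+1)) * ((n:ℝ)+1)
          = PowerSeries.coeff n (((PowerSeries.exp ℝ - 1) ^ (k+1)).derivativeFun) := by
        rw [show ∀ f : PowerSeries ℝ, f.derivativeFun = PowerSeries.derivative ℝ f from fun _ => rfl, PowerSeries.coeff_derivativeFun]
      rw [dPow, dExp] at hd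
      have hsplit : ((k : PowerSeries ℝ)+1) * (PowerSeries.exp ℝ - 1) ^ k * PowerSeries.exp ℝ
          = PowerSeries.C ((k:ℝ)+1) * ((PowerSeries.exp ℝ - 1) ^ k
            + (PowerSeries.exp ℝ - 1) ^ (k+1)) := by
        have hC : ((k : PowerSeries ℝ)+1) = PowerSeries.C ((k:ℝ)+1) := by
          rw [map_add, map_one, map_natCast]
        rw [hC]; ring
      rw [hsplit, PowerSeries.coeff_C_mul, map_add] at hd
      -- now combine
      have hfac : ((n+1)! : ℝ) = ((n:ℝ)+1) * (n ! : ℝ) := by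
        rw [Nat.factorial_succ]; push_cast; ring
      have hS : (S (n+1) (k+1) : ℝ) = ((k:ℝ)+1) * (S n (k+1) : ℝ) + (S n k : ℝ) := by
        show ((S (n+1) (k+1) : ℕ) : ℝ) = _
        rw [show S (n+1) (k+1) = (k+1) * S n (k+1) + S n k from rfl]
        push_cast; ring
      have hkfac : ((k+1)! : ℝ) = ((k:ℝ)+1) * (k ! : ℝ) := by
        rw [Nat.factorial_succ]; push_cast; ring
      rw [hfac, hS, hkfac]
      have := ihk n
      nlinarith [hd, ihk n, ihn]

lemma hasSum_exp_sub_one (z : ℝ) :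
    HasSum (fun n => PowerSeries.coeff n (PowerSeries.exp ℝ - 1) * z ^ n)
      (Real.exp z - 1) := by
  have h1 : HasSum (fun n => z ^ n / (n ! : ℝ)) (Real.exp z) := by
    rw [Real.exp_eq_exp_ℝ]
    exact NormedSpace.expSeries_div_hasSum_exp z
  have h2 : HasSum (fun n : ℕ => if n = 0 then (1:ℝ) else 0) 1 := hasSum_ite_eq 0 1
  have := h1.sub h2
  refine this.congr_fun fun n => ?_
  simp only [map_sub, PowerSeries.coeff_exp, PowerSeries.coeff_one, eq_ratCast]
  rcases eq_or_ne n 0 with rfl | hn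
  · simp
  · simp only [if_neg hn]
    push_cast
    ring

lemma coeff_exp_sub_one_eq (n : ℕ) :
    PowerSeries.coeff n (PowerSeries.exp ℝ - 1)
      = if n = 0 then 0 else ((n ! : ℝ))⁻¹ := by
  simp only [map_sub, PowerSeries.coeff_exp, PowerSeries.coeff_one, eq_ratCast]
  rcases eq_or_ne n 0 with rfl | hn
  · simp
  · rw [if_neg hn, if_neg hn]; push_cast; field_simp; simp

lemma summable_norm_exp_sub_one (z : ℝ) :
    Summable (fun n => ‖PowerSeries.coeff n (PowerSeries.exp ℝ - 1) * z ^ n‖) := by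
  refine Summable.of_nonneg_of_le (fun n => norm_nonneg _) (fun n => ?_)
    (Real.summable_pow_div_factorial |z|)
  rw [coeff_exp_sub_one_eq]
  rcases eq_or_ne n 0 with rfl | hn
  · simp
  · rw [if_neg hn, norm_mul, norm_inv, norm_pow]
    simp only [Real.norm_eq_abs, Nat.abs_cast]
    exact le_of_eq (by ring)

lemma hasSum_E (k : ℕ) (z : ℝ) :
    HasSum (fun n => PowerSeries.coeff n ((PowerSeries.exp ℝ - 1) ^ k) * z ^ n)
        ((Real.exp z - 1) ^ k) ∧
      Summable (fun n => ‖PowerSeries.coeff n ((PowerSeries.exp ℝ - 1) ^ k) * z ^ n‖) := by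
  induction k with
  | zero =>
    have hfun : ∀ n : ℕ, PowerSeries.coeff n ((PowerSeries.exp ℝ - 1) ^ 0) * z ^ n
        = if n = 0 then (1:ℝ) else 0 := by
      intro n
      rcases eq_or_ne n 0 with rfl | hn
      · simp
      · simp [PowerSeries.coeff_one, hn]
    constructor
    · rw [pow_zero]
      exact (hasSum_ite_eq 0 (1:ℝ)).congr_fun fun n => hfun n
    · refine Summable.congr (f := fun n : ℕ => if n = 0 then (1:ℝ) else 0) ?_ fun n => ?_
      · exact (hasSum_ite_eq 0 (1:ℝ)).summable
      · rw [hfun n]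
        split_ifs with h <;> simp [h]
  | succ k ih =>
    set f : ℕ → ℝ := fun n => PowerSeries.coeff n ((PowerSeries.exp ℝ - 1) ^ k) * z ^ n
    set g : ℕ → ℝ := fun n => PowerSeries.coeff n (PowerSeries.exp ℝ - 1) * z ^ n
    have hfn : Summable fun n => ‖f n‖ := ih.2
    have hgn : Summable fun n => ‖g n‖ := summable_norm_exp_sub_one z
    have hsn : Summable fun n : ℕ => ‖∑ kl ∈ Finset.HasAntidiagonal.antidiagonal n, f kl.1 * g kl.2‖ :=
      summable_norm_sum_mul_antidiagonal_of_summable_norm hfn hgn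
    have hs : Summable fun n : ℕ => ∑ kl ∈ Finset.HasAntidiagonal.antidiagonal n, f kl.1 * g kl.2 := hsn.of_norm
    have htsum : ((∑' n, f n) * ∑' n, g n)
        = ∑' n : ℕ, ∑ kl ∈ Finset.HasAntidiagonal.antidiagonal n, f kl.1 * g kl.2 :=
      tsum_mul_tsum_eq_tsum_sum_antidiagonal_of_summable_norm hfn hgn
    have hfun : ∀ n : ℕ, (∑ kl ∈ Finset.HasAntidiagonal.antidiagonal n, f kl.1 * g kl.2)
        = PowerSeries.coeff n ((PowerSeries.exp ℝ - 1) ^ (k+1)) * z ^ n := by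
      intro n
      rw [pow_succ, PowerSeries.coeff_mul, Finset.sum_mul]
      refine Finset.sum_congr rfl fun kl hkl => ?_
      have : kl.1 + kl.2 = n := Finset.HasAntidiagonal.mem_antidiagonal.mp hkl
      simp only [f, g]
      rw [← this, pow_add]
      ring
    have hsum : HasSum (fun n => PowerSeries.coeff n ((PowerSeries.exp ℝ - 1) ^ (k+1)) * z ^ n)
        ((Real.exp z - 1) ^ (k+1)) := by
      have : HasSum (fun n : ℕ => ∑ kl ∈ Finset.HasAntidiagonal.antidiagonal n, f kl.1 * g kl.2)
          ((Real.exp z - 1) ^ (k+1)) := by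
        rw [hs.hasSum_iff, ← htsum, ih.1.tsum_eq, (hasSum_exp_sub_one z).tsum_eq, pow_succ]
      exact this.congr_fun fun n => (hfun n).symm ▸ rfl
    refine ⟨hsum, ?_⟩
    refine hsn.congr fun n => ?_
    rw [hfun n]

/-- `S(n,k) = C(n,k) ·` (the `(n-k)`-th derivative at `0` of `((e^x - 1)/x)^k`, the function
being extended by its limiting value `1^k` at `x = 0`). -/
theorem stirling2_eq_iteratedDeriv (n k : ℕ) (h : k ≤ n) :
    (S n k : ℝ) = (n.choose k : ℝ) *
      iteratedDeriv (n - k)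
        (fun x : ℝ => (if x = 0 then 1 else (Real.exp x - 1) / x) ^ k) 0 := by
  set m := n - k with hm
  set c : ℕ → ℝ := fun j => PowerSeries.coeff (j + k) ((PowerSeries.exp ℝ - 1) ^ k) with hc
  set f : ℝ → ℝ := fun x => (if x = 0 then 1 else (Real.exp x - 1) / x) ^ k with hf
  set p := FormalMultilinearSeries.ofScalars ℝ c with hp
  have hpcoeff : ∀ j, p.coeff j = c j := by
    intro j
    simp [hp, FormalMultilinearSeries.coeff, FormalMultilinearSeries.ofScalars,
      List.prod_ofFn, Finset.prod_const_one]
  have hckk : c 0 = 1 := by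
    have := coeff_E k k
    rw [S_self_s18] at this
    have hfk : (k ! : ℝ) ≠ 0 := by positivity
    have : PowerSeries.coeff k ((PowerSeries.exp ℝ - 1) ^ k) = 1 := by
      field_simp at this; norm_num at this; linarith [this]
    simpa [hc] using this
  have hzero : ∀ i, i < k → PowerSeries.coeff i ((PowerSeries.exp ℝ - 1) ^ k) = 0 := by
    intro i hi
    have := coeff_E k i
    rw [S_eq_zero_of_lt hi] at this
    have hfi : (i ! : ℝ) ≠ 0 := by positivity
    simpa [hfi] using this
  have key : ∀ z : ℝ, HasSum (fun j => z ^ j • p.coeff j) (f (0 + z)) := by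
    intro z
    rw [zero_add]
    simp only [smul_eq_mul, hpcoeff]
    rcases eq_or_ne z 0 with rfl | hz
    · have hf0 : f 0 = 1 := by simp [hf]
      rw [hf0]
      refine (hasSum_ite_eq 0 (1:ℝ)).congr_fun fun j => ?_
      cases j with
      | zero => simp [hckk]
      | succ j => simp
    · have H := (hasSum_E k z).1
      have H2 : HasSum (fun j => PowerSeries.coeff (j + k) ((PowerSeries.exp ℝ - 1) ^ k)
          * z ^ (j + k)) ((Real.exp z - 1) ^ k) := by
        refine (hasSum_nat_add_iff
          (f := fun i => PowerSeries.coeff i ((PowerSeries.exp ℝ - 1) ^ k) * z ^ i) k).mpr ?_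
        have hsum0 : (∑ i ∈ Finset.range k,
            PowerSeries.coeff i ((PowerSeries.exp ℝ - 1) ^ k) * z ^ i) = 0 :=
          Finset.sum_eq_zero fun i hi => by
            rw [hzero i (Finset.mem_range.mp hi), zero_mul]
        rw [hsum0, add_zero]
        exact H
      have H3 := H2.mul_right (z ^ k)⁻¹
      have hfz : f z = (Real.exp z - 1) ^ k * (z ^ k)⁻¹ := by
        rw [hf]
        simp only [if_neg hz]
        rw [div_pow, div_eq_mul_inv]
      rw [hfz]
      refine H3.congr_fun fun j => ?_
      have hzk : z ^ k ≠ 0 := pow_ne_zero k hz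
      rw [hc]
      field_simp
      rw [pow_add]
      ring
  have hF : HasFPowerSeriesAt f p 0 := hasFPowerSeriesAt_iff.mpr (Filter.Eventually.of_forall key)
  obtain ⟨r, hr⟩ := hF
  have hd : iteratedDeriv m f 0 = (m ! : ℝ) * c m := by
    have h1 := hr.factorial_smul (1:ℝ) m
    rw [iteratedDeriv_eq_iteratedFDeriv, ← h1]
    rw [show (p m fun _ => (1:ℝ)) = p.coeff m from rfl, hpcoeff]
    simp [nsmul_eq_mul]
  rw [hd]
  have hmk : m + k = n := Nat.sub_add_cancel h
  have hcm : c m * (n ! : ℝ) = (k ! : ℝ) * S n k := by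
    rw [hc]
    simp only [hmk]
    exact coeff_E k n
  have hn0 : (n ! : ℝ) ≠ 0 := by positivity
  have key' : (n.choose k : ℝ) * k ! * m ! = n ! := by
    exact_mod_cast congrArg (Nat.cast (R := ℝ)) (Nat.choose_mul_factorial_mul_factorial h)
  have hcm' : c m = (k ! : ℝ) * S n k / n ! := by
    rw [eq_div_iff hn0]; exact hcm
  rw [hcm']
  have hrw : (n.choose k : ℝ) * ((m ! : ℝ) * ((k ! : ℝ) * S n k / n !))
      = ((n.choose k : ℝ) * k ! * m !) / n ! * S n k := by ring
  rw [hrw, key', div_self hn0, one_mul]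
end
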